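/- arXiv:1106.4126 — 6 statements merged into one kernel-verified Lean document; each statement's English description precedes it below -/
import Mathlib

section
/- Let n ≥ 1, let P be a complex polynomial of degree at most n, and let δ be a complex number with P'(δ) ≠ 0. Then for any complex number ω, the polynomial P(z) − ω has a zero λ in the closed disk whose diameter is the line segment [δ, δ − n·(P(δ) − ω)/P'(δ)]; that is, there exists λ with P(λ) = ω and |λ − (δ − n(P(δ)−ω)/(2P'(δ)))| ≤ n·|P(δ) − ω| / (2|P'(δ)|). -/
open Polynomial

theorem zero_in_disk_of_diameter (n : ℕ) (hn : 1 ≤ n) (P : Polynomial ℂ)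
    (hP : P.natDegree ≤ n) (δ : ℂ) (hδ : (Polynomial.derivative P).eval δ ≠ 0) (ω : ℂ) :
    ∃ lam : ℂ, P.eval lam = ω ∧
      ‖lam - (δ - (n : ℂ) * (P.eval δ - ω) / (2 * (Polynomial.derivative P).eval δ))‖
        ≤ (n : ℝ) * ‖P.eval δ - ω‖ /
            (2 * ‖(Polynomial.derivative P).eval δ‖) := by
  classical
  by_cases h0 : P.eval δ = ω
  · refine ⟨δ, h0, ?_⟩
    simp [h0]
  set Q : ℂ[X] := P - C ω with hQdef
  have hQd : derivative Q = derivative P := by simp [hQdef]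
  have hQδ : Q.eval δ ≠ 0 := by
    simpa [hQdef, sub_eq_zero] using h0
  have hδ' : (derivative Q).eval δ ≠ 0 := by rw [hQd]; exact hδ
  have hQd0 : derivative Q ≠ 0 := fun h => hδ' (by rw [h, eval_zero])
  have hdeg : 0 < Q.natDegree := by
    rcases Nat.eq_zero_or_pos Q.natDegree with h | h
    · obtain ⟨c, hc⟩ := natDegree_eq_zero.mp h
      exact absurd (by rw [← hc, derivative_C]) hQd0
    · exact h
  set t : Multiset ℂ := Q.roots with htdef
  have ht : Multiset.card t = Q.natDegree :=
    splits_iff_card_roots.mp (IsAlgClosed.splits Q)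
  have hm : 0 < Multiset.card t := ht ▸ hdeg
  have hmn : Multiset.card t ≤ n := by
    rw [ht]
    calc Q.natDegree ≤ max P.natDegree (C ω).natDegree := natDegree_sub_le _ _
      _ ≤ n := by simpa [natDegree_C] using hP
  have hfac : C Q.leadingCoeff * (t.map fun a => X - C a).prod = Q :=
    C_leadingCoeff_mul_prod_multiset_X_sub_C ht
  have hroot : ∀ a ∈ t, Q.eval a = 0 := fun a ha =>
    (isRoot_of_mem_roots ha : Q.IsRoot a)
  have hwne : ∀ a ∈ t, δ - a ≠ 0 := by
    intro a ha h
    apply hQδ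
    rw [sub_eq_zero] at h
    rw [h]; exact hroot a ha
  -- the key logarithmic derivative identity
  have key : (derivative Q).eval δ = Q.eval δ * (t.map fun a => (δ - a)⁻¹).sum := by
    have hevQ : Q.eval δ = Q.leadingCoeff * (t.map fun a => δ - a).prod := by
      conv_lhs => rw [← hfac]
      simp [eval_multiset_prod, Multiset.map_map, Function.comp]
    have hevQ' : (derivative Q).eval δ
        = Q.leadingCoeff * (t.map fun a => ((t.erase a).map fun b => δ - b).prod).sum := by
      conv_lhs => rw [← hfac, derivative_C_mul, derivative_prod]
      rw [eval_mul, eval_C]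
      congr 1
      rw [← coe_evalRingHom, map_multiset_sum, Multiset.map_map]
      congr 1
      refine Multiset.map_congr rfl fun a ha => ?_
      simp [eval_multiset_prod, Multiset.map_map, Function.comp]
    rw [hevQ', hevQ]
    have : (t.map fun a => ((t.erase a).map fun b => δ - b).prod).sum
        = (t.map fun a => (δ - a)⁻¹ * (t.map fun b => δ - b).prod).sum := by
      refine congrArg _ (Multiset.map_congr rfl fun a ha => ?_)
      rw [← Multiset.prod_map_erase (f := fun b => δ - b) ha,
        ← mul_assoc, inv_mul_cancel₀ (hwne a ha), one_mul]
    rw [this]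
    have : (t.map fun a => (δ - a)⁻¹ * (t.map fun b => δ - b).prod).sum
        = (t.map fun b => δ - b).prod * (t.map fun a => (δ - a)⁻¹).sum := by
      rw [← Multiset.sum_map_mul_left]
      exact congrArg _ (Multiset.map_congr rfl fun a _ => mul_comm _ _)
    rw [this]; ring
  set s : ℂ := (derivative Q).eval δ / Q.eval δ with hsdef
  have hs0 : s ≠ 0 := div_ne_zero hδ' hQδ
  have hsum1 : (t.map fun a => (s * (δ - a))⁻¹).sum = 1 := by
    have : (t.map fun a => (s * (δ - a))⁻¹).sum = s⁻¹ * (t.map fun a => (δ - a)⁻¹).sum := by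
      rw [← Multiset.sum_map_mul_left]
      exact congrArg _ (Multiset.map_congr rfl fun a _ => by rw [mul_inv])
    rw [this, hsdef]
    have hsum : (t.map fun a => (δ - a)⁻¹).sum = (derivative Q).eval δ / Q.eval δ := by
      rw [key]; field_simp
    rw [hsum]
    field_simp
  have hre : (t.map fun a => ((s * (δ - a))⁻¹).re).sum = 1 := by
    have h1 := congrArg Complex.re hsum1
    simp only [Complex.one_re] at h1
    have h2 := map_multiset_sum Complex.reAddGroupHom
      (Multiset.map (fun a => (s * (δ - a))⁻¹) t)
    rw [Multiset.map_map] at h2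
    rw [← h1]
    exact h2.symm
  -- find a good root
  have hex : ∃ a ∈ t, (1 : ℝ) / (Multiset.card t) ≤ ((s * (δ - a))⁻¹).re := by
    by_contra h
    push_neg at h
    have hne : t ≠ 0 := by
      intro h'; rw [h'] at hm; simp at hm
    have hlt := Multiset.sum_lt_sum_of_nonempty hne h
    rw [hre, Multiset.map_const', Multiset.sum_replicate, nsmul_eq_mul,
      mul_one_div, div_self (by positivity : (Multiset.card t : ℝ) ≠ 0)] at hlt
    exact lt_irrefl _ hlt
  obtain ⟨a, hat, hage⟩ := hex
  refine ⟨a, ?_, ?_⟩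
  · have := hroot a hat
    rw [hQdef] at this
    simp only [eval_sub, eval_C, sub_eq_zero] at this
    exact this
  set w : ℂ := δ - a with hwdef
  have hw : w ≠ 0 := hwne a hat
  have hre1 : 1 ≤ (n : ℝ) * ((s * w)⁻¹).re := by
    have h1 : (1 : ℝ) / n ≤ (1 : ℝ) / (Multiset.card t) := by
      apply one_div_le_one_div_of_le
      · exact_mod_cast hm
      · exact_mod_cast hmn
    have h2 : (1 : ℝ) / n ≤ ((s * w)⁻¹).re := le_trans h1 hage
    have hn' : (0 : ℝ) < n := by exact_mod_cast hn
    calc (1 : ℝ) = n * (1 / n) := by field_simp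
      _ ≤ (n : ℝ) * ((s * w)⁻¹).re := by
          exact mul_le_mul_of_nonneg_left h2 (le_of_lt hn')
  -- rewrite the goal in terms of s and w
  set z : ℂ := (n : ℂ) / (2 * s) with hzdef
  have hPQ : P.eval δ - ω = Q.eval δ := by simp [hQdef]
  have hgoalL : a - (δ - (n : ℂ) * (P.eval δ - ω) / (2 * (derivative P).eval δ)) = z - w := by
    rw [hPQ, ← hQd, hzdef, hsdef, hwdef]
    field_simp
    ring
  have hgoalR : (n : ℝ) * ‖P.eval δ - ω‖ / (2 * ‖(derivative P).eval δ‖)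
      = ‖z‖ := by
    rw [hPQ, ← hQd, hzdef, hsdef]
    rw [norm_div, norm_mul, norm_div]
    have h2 : ‖(2 : ℂ)‖ = 2 := by
      simp
    have hn2 : ‖(n : ℂ)‖ = (n : ℝ) := Complex.norm_natCast n
    rw [h2, hn2]
    have ha1 : ‖Q.eval δ‖ ≠ 0 := by simpa using hQδ
    have ha2 : ‖(derivative Q).eval δ‖ ≠ 0 := by simpa using hδ'
    field_simp
  rw [hgoalL, hgoalR]
  -- the main estimate
  have hzw : z * (starRingEnd ℂ) w
      = ((Complex.normSq w * n / 2 : ℝ) : ℂ) * (s * w)⁻¹ := by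
    have hc : ((Complex.normSq w : ℝ) : ℂ) = w * (starRingEnd ℂ) w := (Complex.mul_conj w).symm
    push_cast
    rw [hc, hzdef]
    field_simp
  have hrezw : (z * (starRingEnd ℂ) w).re = Complex.normSq w * n / 2 * ((s * w)⁻¹).re := by
    rw [hzw, Complex.re_ofReal_mul]
  have hns : Complex.normSq (z - w) ≤ Complex.normSq z := by
    rw [Complex.normSq_sub, hrezw]
    have h1 : Complex.normSq w * (1 - (n : ℝ) * ((s * w)⁻¹).re) ≤ 0 :=
      mul_nonpos_of_nonneg_of_nonpos (Complex.normSq_nonneg w) (by linarith)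
    nlinarith [Complex.normSq_nonneg w]
  calc ‖z - w‖ = Real.sqrt (Complex.normSq (z - w)) := Complex.norm_def _
    _ ≤ Real.sqrt (Complex.normSq z) := Real.sqrt_le_sqrt hns
    _ = ‖z‖ := (Complex.norm_def _).symm
end

section
/- Let δ be a real number with 0 < δ < 1 and let a_1, ..., a_n be complex numbers in the closed unit disk. Set s = (1/n)·Re(Σ_{k=1}^n a_k). Then ∏_{k=1}^n |δ − a_k| ≤ (1 + δ² − 2δs)^{n/2}. -/
open Finset

theorem prod_abs_le_of_mem_unit_disk (n : ℕ) (hn : 1 ≤ n) (δ : ℝ) (hδ0 : 0 < δ) (hδ1 : δ < 1)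
    (a : Fin n → ℂ) (ha : ∀ k, ‖a k‖ ≤ 1) :
    ∏ k, ‖(δ : ℂ) - a k‖ ≤
      (1 + δ ^ 2 - 2 * δ * ((1 / (n : ℝ)) * (∑ k, a k).re)) ^ ((n : ℝ) / 2) := by
  have hn0 : (0:ℝ) < n := by exact_mod_cast hn
  set z : Fin n → ℝ := fun k => 1 + δ ^ 2 - 2 * δ * (a k).re with hzdef
  have hsq : ∀ k, ‖(δ : ℂ) - a k‖ ^ 2 ≤ z k := by
    intro k
    have h1 : (a k).re ^ 2 + (a k).im ^ 2 ≤ 1 := by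
      have h := Complex.sq_norm (a k)
      rw [Complex.normSq_apply] at h
      nlinarith [ha k, norm_nonneg (a k)]
    have h2 : ‖(δ : ℂ) - a k‖ ^ 2 = (δ - (a k).re) ^ 2 + (a k).im ^ 2 := by
      rw [Complex.sq_norm, Complex.normSq_apply]
      simp [sub_sq]; ring
    have hz : z k = 1 + δ ^ 2 - 2 * δ * (a k).re := rfl
    rw [h2, hz]
    nlinarith
  have hznn : ∀ k, 0 ≤ z k := fun k => le_trans (sq_nonneg _) (hsq k)
  have habs_le : ∀ k, ‖(δ : ℂ) - a k‖ ≤ Real.sqrt (z k) := by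
    intro k
    rw [show ‖(δ : ℂ) - a k‖ = Real.sqrt (‖(δ : ℂ) - a k‖ ^ 2) by
      rw [Real.sqrt_sq (norm_nonneg _)]]
    exact Real.sqrt_le_sqrt (hsq k)
  -- AM-GM on z with weights 1/n
  set M : ℝ := 1 + δ ^ 2 - 2 * δ * ((1 / (n : ℝ)) * (∑ k, a k).re) with hMdef
  have hgm : ∏ k, (z k) ^ ((1:ℝ)/n) ≤ M := by
    have := Real.geom_mean_le_arith_mean_weighted Finset.univ (fun _ => (1:ℝ)/n) z
      (fun i _ => by positivity)
      (by simp [Finset.card_univ]; field_simp)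
      (fun i _ => hznn i)
    refine this.trans_eq ?_
    rw [hMdef, hzdef]
    rw [← Finset.mul_sum]
    simp only [Finset.sum_sub_distrib, Finset.sum_add_distrib, Finset.sum_const,
      Finset.card_univ, Fintype.card_fin, nsmul_eq_mul, ← Finset.mul_sum, Complex.re_sum]
    field_simp
  have hMnn : (0:ℝ) ≤ M := le_trans (Finset.prod_nonneg fun i _ => Real.rpow_nonneg (hznn i) _) hgm
  have hP : ∏ k, (z k) ^ ((1:ℝ)/n) = (∏ k, z k) ^ ((1:ℝ)/n) := by
    rw [← Real.finset_prod_rpow _ _ (fun i _ => hznn i)]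
  have hPle : ∏ k, z k ≤ M ^ (n:ℝ) := by
    have h1 : ((∏ k, z k) ^ ((1:ℝ)/n)) ^ (n:ℝ) ≤ M ^ (n:ℝ) :=
      Real.rpow_le_rpow (Real.rpow_nonneg (Finset.prod_nonneg fun i _ => hznn i) _)
        (hP ▸ hgm) (le_of_lt hn0)
    rwa [← Real.rpow_mul
      (Finset.prod_nonneg fun i _ => hznn i), one_div, inv_mul_cancel₀ (ne_of_gt hn0),
      Real.rpow_one] at h1
  calc ∏ k, ‖(δ : ℂ) - a k‖ ≤ ∏ k, Real.sqrt (z k) :=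
        Finset.prod_le_prod (fun i _ => norm_nonneg _) (fun i _ => habs_le i)
    _ = Real.sqrt (∏ k, z k) := by
        simp_rw [Real.sqrt_eq_rpow]
        rw [← Real.finset_prod_rpow _ _ (fun i _ => hznn i)]
    _ ≤ Real.sqrt (M ^ (n:ℝ)) := Real.sqrt_le_sqrt hPle
    _ = M ^ ((n:ℝ)/2) := by
        rw [Real.sqrt_eq_rpow, ← Real.rpow_mul hMnn, mul_one_div]
end

section
/- Let δ and a be real numbers with 0 < δ < a < 1, and let b_1, ..., b_{n−1} be complex numbers satisfying |b_k| ≤ 1 and |b_k − a| ≥ 1 for all k. Set s = (1/(n−1))·Re(Σ_{k=1}^{n−1} b_k) and q = (a/2 − s)/(1 + a/2). Then ∏_{k=1}^{n−1} |(δ − b_k)/(a − b_k)| ≤ A^{n−1}, where A = ((1+δ)/(1+a))^q · (1 + δ² − δa)^{(1−q)/2}. -/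
open Finset

private lemma rpow_sum_aux {ι : Type*} (s : Finset ι) (P : ℝ) (hP : 0 < P) (w : ι → ℝ) :
    ∏ i ∈ s, P ^ w i = P ^ (∑ i ∈ s, w i) := by
  rw [Real.rpow_def_of_pos hP, Finset.mul_sum, Real.exp_sum]
  exact Finset.prod_congr rfl fun i _ => by rw [Real.rpow_def_of_pos hP]

set_option maxHeartbeats 1000000 in
private lemma real_factor_le (δ a x y : ℝ) (hδ0 : 0 < δ) (hδa : δ < a) (ha1 : a < 1)
    (h1' : x^2 + y^2 ≤ 1) (h2' : 1 ≤ (x - a)^2 + y^2) :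
    ((δ - x)^2 + y^2) / ((a - x)^2 + y^2) ≤
      (((1+δ)/(1+a))^2 : ℝ) ^ ((a/2 - x)/(1+a/2)) *
        (1+δ^2-δ*a) ^ (1 - (a/2 - x)/(1+a/2)) := by
  have ha0 : 0 < a := hδ0.trans hδa
  have hxa : x ≤ a / 2 := by nlinarith
  have hx1 : -1 ≤ x := by nlinarith
  have hP : (0:ℝ) < ((1+δ)/(1+a))^2 := by positivity
  have hδa1 : δ * a < 1 := by nlinarith
  have hQ : (0:ℝ) < 1 + δ^2 - δ*a := by nlinarith
  have hPQ : ((1+δ)/(1+a))^2 ≤ 1 + δ^2 - δ*a := by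
    rw [div_pow, div_le_iff₀ (by positivity)]
    nlinarith [mul_nonneg (mul_nonneg (by linarith : (0:ℝ) ≤ a - δ)
      (by linarith : (0:ℝ) ≤ 2 + a)) (by linarith : (0:ℝ) ≤ 1 - δ*a)]
  have hw0 : 0 ≤ (a/2 - x)/(1+a/2) := div_nonneg (by linarith) (by linarith)
  have hw1 : (a/2 - x)/(1+a/2) ≤ 1 := by
    rw [div_le_one (by linarith)]; linarith
  have hD : (1:ℝ) ≤ (a - x)^2 + y^2 := by nlinarith
  have hDpos : (0:ℝ) < (a - x)^2 + y^2 := by linarith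
  have hden2 : (0:ℝ) < 1 + a^2 - 2*a*x := by nlinarith
  have hnum2 : (0:ℝ) < 1 + δ^2 - 2*δ*x := by nlinarith
  -- Step A
  have stepA : ((δ - x)^2 + y^2) / ((a - x)^2 + y^2)
      ≤ (1 + δ^2 - 2*δ*x) / (1 + a^2 - 2*a*x) := by
    rw [div_le_div_iff₀ hDpos hden2]
    nlinarith [mul_nonneg (mul_nonneg (by linarith : (0:ℝ) ≤ 1 - (x^2+y^2))
      (by linarith : (0:ℝ) ≤ a - δ)) (by linarith : (0:ℝ) ≤ a + δ - 2*x)]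
  -- Step B
  set w : ℝ := (a/2 - x)/(1+a/2) with hwdef
  set S : ℝ := w / (((1+δ)/(1+a))^2) + (1 - w) / (1+δ^2-δ*a) with hSdef
  have hSpos : 0 < S := by
    have h3 : S = (w * (1+δ^2-δ*a) + (1 - w) * (((1+δ)/(1+a))^2)) /
        ((((1+δ)/(1+a))^2) * (1+δ^2-δ*a)) := by
      rw [hSdef]; field_simp
    rw [h3]
    apply div_pos _ (by positivity)
    nlinarith
  have key : (1 + a^2 - 2*a*x) - (1 + δ^2 - 2*δ*x) * S
      = (2*δ*(1/(((1+δ)/(1+a))^2) - 1/(1+δ^2-δ*a))/(1+a/2)) * ((x+1)*(a/2 - x)) := by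
    rw [hSdef, hwdef]
    have e1 : (1+a) ≠ 0 := by positivity
    have e2 : (1+δ) ≠ 0 := by positivity
    have e3 : (1+δ^2-δ*a) ≠ 0 := hQ.ne'
    have e4 : (1+a/2) ≠ 0 := by positivity
    generalize hQQ : (1+δ^2-δ*a) = Q at e3 ⊢
    field_simp
    rw [← hQQ]
    ring
  have hc : (0:ℝ) ≤ (2*δ*(1/(((1+δ)/(1+a))^2) - 1/(1+δ^2-δ*a))/(1+a/2)) * ((x+1)*(a/2 - x)) := by
    apply mul_nonneg
    · apply div_nonneg _ (by linarith)
      have h4 : 1/(1+δ^2-δ*a) ≤ 1/(((1+δ)/(1+a))^2) := one_div_le_one_div_of_le hP hPQ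
      nlinarith
    · exact mul_nonneg (by linarith) (by linarith)
  have stepB : (1 + δ^2 - 2*δ*x) / (1 + a^2 - 2*a*x) ≤ 1 / S := by
    rw [div_le_div_iff₀ hden2 hSpos]
    rw [← key] at hc
    linarith [hc]
  -- Step C
  have stepC : 1 / S ≤ (((1+δ)/(1+a))^2) ^ w * (1+δ^2-δ*a) ^ (1 - w) := by
    have amgm := Real.geom_mean_le_arith_mean2_weighted hw0 (by linarith : (0:ℝ) ≤ 1 - w)
      (inv_nonneg.mpr hP.le) (inv_nonneg.mpr hQ.le) (by ring)
    rw [Real.inv_rpow hP.le, Real.inv_rpow hQ.le] at amgm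
    have hT : (0:ℝ) < (((1+δ)/(1+a))^2) ^ w * (1+δ^2-δ*a) ^ (1 - w) := by positivity
    have hTinv : ((((1+δ)/(1+a))^2) ^ w * (1+δ^2-δ*a) ^ (1 - w))⁻¹ ≤ S := by
      rw [mul_inv]
      calc ((((1+δ)/(1+a))^2) ^ w)⁻¹ * ((1+δ^2-δ*a) ^ (1-w))⁻¹
          ≤ w * (((1+δ)/(1+a))^2)⁻¹ + (1-w) * (1+δ^2-δ*a)⁻¹ := amgm
        _ = S := by rw [hSdef]; ring
    rw [div_le_iff₀ hSpos]
    calc (1:ℝ) = ((((1+δ)/(1+a))^2) ^ w * (1+δ^2-δ*a) ^ (1 - w)) *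
          ((((1+δ)/(1+a))^2) ^ w * (1+δ^2-δ*a) ^ (1 - w))⁻¹ := (mul_inv_cancel₀ hT.ne').symm
      _ ≤ _ := mul_le_mul_of_nonneg_left hTinv hT.le
  exact le_trans (le_trans stepA stepB) stepC

private lemma factor_sq_le (δ a : ℝ) (hδ0 : 0 < δ) (hδa : δ < a) (ha1 : a < 1)
    (z : ℂ) (h1 : ‖z‖ ≤ 1) (h2 : 1 ≤ ‖z - (a : ℂ)‖) :
    (‖((δ : ℂ) - z) / ((a : ℂ) - z)‖)^2 ≤
      (((1+δ)/(1+a))^2 : ℝ) ^ ((a/2 - z.re)/(1+a/2)) *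
        (1+δ^2-δ*a) ^ (1 - (a/2 - z.re)/(1+a/2)) := by
  have h1' : z.re^2 + z.im^2 ≤ 1 := by
    have h := Complex.sq_norm z
    rw [Complex.normSq_apply] at h
    nlinarith [norm_nonneg z]
  have h2' : 1 ≤ (z.re - a)^2 + z.im^2 := by
    have h := Complex.sq_norm (z - (a:ℂ))
    rw [Complex.normSq_apply] at h
    simp only [Complex.sub_re, Complex.sub_im, Complex.ofReal_re, Complex.ofReal_im,
      sub_zero] at h
    nlinarith
  have habs : (‖((δ : ℂ) - z) / ((a : ℂ) - z)‖)^2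
      = ((δ - z.re)^2 + z.im^2) / ((a - z.re)^2 + z.im^2) := by
    rw [norm_div, div_pow, Complex.sq_norm, Complex.sq_norm, Complex.normSq_apply,
      Complex.normSq_apply]
    simp only [Complex.sub_re, Complex.sub_im, Complex.ofReal_re, Complex.ofReal_im, zero_sub]
    ring_nf
  rw [habs]
  exact real_factor_le δ a z.re z.im hδ0 hδa ha1 h1' h2'

set_option maxHeartbeats 1000000 in
theorem prod_abs_quotient_le (n : ℕ) (hn : 2 ≤ n) (δ a : ℝ)
    (hδ0 : 0 < δ) (hδa : δ < a) (ha1 : a < 1)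
    (b : Fin (n - 1) → ℂ) (hb1 : ∀ k, ‖b k‖ ≤ 1)
    (hb2 : ∀ k, 1 ≤ ‖b k - (a : ℂ)‖)
    (s q A : ℝ)
    (hs : s = (1 / ((n : ℝ) - 1)) * (∑ k, b k).re)
    (hq : q = (a / 2 - s) / (1 + a / 2))
    (hA : A = ((1 + δ) / (1 + a)) ^ q * (1 + δ ^ 2 - δ * a) ^ ((1 - q) / 2)) :
    ∏ k, ‖((δ : ℂ) - b k) / ((a : ℂ) - b k)‖ ≤ A ^ (n - 1) := by
  have ha0 : 0 < a := hδ0.trans hδa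
  have hδa1 : δ * a < 1 := by nlinarith
  have hP : (0:ℝ) < ((1+δ)/(1+a))^2 := by positivity
  have hQ : (0:ℝ) < 1 + δ^2 - δ*a := by nlinarith
  have hm : ((n - 1 : ℕ) : ℝ) = (n : ℝ) - 1 := by
    have h1 : 1 ≤ n := by omega
    push_cast [Nat.cast_sub h1]
    ring
  have hn1 : (0:ℝ) < (n : ℝ) - 1 := by
    have h2 : (2:ℝ) ≤ (n:ℝ) := by exact_mod_cast hn
    linarith
  have hre : (∑ k, b k).re = ((n:ℝ) - 1) * s := by
    rw [hs]; field_simp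
  have hsumw : ∑ k, (a/2 - (b k).re)/(1+a/2) = ((n:ℝ) - 1) * q := by
    have h2 : ∑ k, (a/2 - (b k).re)/(1+a/2)
        = (((n-1:ℕ):ℝ) * (a/2) - (∑ k, b k).re)/(1+a/2) := by
      rw [Complex.re_sum, ← Finset.sum_div, Finset.sum_sub_distrib, Finset.sum_const,
        Finset.card_univ, Fintype.card_fin, nsmul_eq_mul]
    rw [h2, hre, hm, hq]
    field_simp
  have hsumw' : ∑ k, (1 - (a/2 - (b k).re)/(1+a/2)) = ((n:ℝ) - 1) * (1 - q) := by
    rw [Finset.sum_sub_distrib, Finset.sum_const, Finset.card_univ, Fintype.card_fin,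
      hsumw, nsmul_eq_mul, mul_one, hm]
    ring
  have hprodG : ∏ k, ((((1+δ)/(1+a))^2 : ℝ) ^ ((a/2 - (b k).re)/(1+a/2)) *
        (1+δ^2-δ*a) ^ (1 - (a/2 - (b k).re)/(1+a/2)))
      = (((1+δ)/(1+a))^2 : ℝ) ^ (((n:ℝ)-1)*q) * (1+δ^2-δ*a) ^ (((n:ℝ)-1)*(1-q)) := by
    rw [Finset.prod_mul_distrib, rpow_sum_aux _ _ hP, rpow_sum_aux _ _ hQ, hsumw, hsumw']
  have h1 : (0:ℝ) < (1+δ)/(1+a) := by positivity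
  have hApos : 0 < A := by
    rw [hA]
    exact mul_pos (Real.rpow_pos_of_pos h1 _) (Real.rpow_pos_of_pos hQ _)
  have hA2 : A ^ 2 = (((1+δ)/(1+a))^2 : ℝ) ^ q * (1+δ^2-δ*a) ^ (1 - q) := by
    rw [hA, mul_pow]
    rw [← Real.rpow_natCast (((1+δ)/(1+a)) ^ q) 2, ← Real.rpow_mul h1.le]
    rw [← Real.rpow_natCast ((1+δ^2-δ*a) ^ ((1-q)/2)) 2, ← Real.rpow_mul hQ.le]
    rw [← Real.rpow_natCast ((1+δ)/(1+a)) 2, ← Real.rpow_mul h1.le]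
    norm_num
    rw [mul_comm q 2]
    exact Or.inl rfl
  have hApow2 : (A ^ (n-1))^2
      = (((1+δ)/(1+a))^2 : ℝ) ^ (((n:ℝ)-1)*q) * (1+δ^2-δ*a) ^ (((n:ℝ)-1)*(1-q)) := by
    rw [← pow_mul, mul_comm (n-1) 2, pow_mul, hA2, mul_pow,
      ← Real.rpow_natCast ((((1+δ)/(1+a))^2 : ℝ) ^ q) (n-1), ← Real.rpow_mul hP.le,
      ← Real.rpow_natCast ((1+δ^2-δ*a) ^ (1-q)) (n-1), ← Real.rpow_mul hQ.le, hm]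
    ring_nf
  have hsq : (∏ k, ‖((δ : ℂ) - b k) / ((a : ℂ) - b k)‖)^2 ≤ (A ^ (n-1))^2 := by
    rw [← Finset.prod_pow, hApow2, ← hprodG]
    apply Finset.prod_le_prod (fun k _ => by positivity)
    intro k _
    exact factor_sq_le δ a hδ0 hδa ha1 (b k) (hb1 k) (hb2 k)
  have hprod0 : 0 ≤ ∏ k, ‖((δ : ℂ) - b k) / ((a : ℂ) - b k)‖ :=
    Finset.prod_nonneg fun k _ => norm_nonneg _
  nlinarith [hsq, hprod0, pow_pos hApos (n-1)]
end

section
/- Let a ∈ (0,1) and let b_1, ..., b_{n−1} be complex numbers satisfying |b_k| ≤ 1 and |b_k − a| ≥ 1 for all k; set s = (1/(n−1))·Re(Σ_{k=1}^{n−1} b_k), p = (a/2 − s)/(1 − a/2) and q = (a/2 − s)/(1 + a/2). Then for every real b > 1 one has ∏_{k=1}^{n−1} |b − b_k| ≥ min(B_1, B_2)^{n−1}, where B_1 = (1 + b − a)^p · (1 + b² − ba)^{(1−p)/2} and B_2 = (1 + b)^q · (1 + b² − ba)^{(1−q)/2}. -/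
set_option maxHeartbeats 1000000

open Finset

lemma log_interp {x y w1 w2 : ℝ} (hx : 0 < x) (hy : 0 < y) (h1 : 0 ≤ w1) (h2 : 0 ≤ w2)
    (hw : w1 + w2 = 1) : w1 * Real.log x + w2 * Real.log y ≤ Real.log (w1*x + w2*y) := by
  have := strictConcaveOn_log_Ioi.concaveOn.2 (Set.mem_Ioi.mpr hx) (Set.mem_Ioi.mpr hy) h1 h2 hw
  simpa [smul_eq_mul] using this

theorem prod_abs_ge_min (n : ℕ) (hn : 2 ≤ n) (a : ℝ) (ha0 : 0 < a) (ha1 : a < 1)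
    (b : Fin (n - 1) → ℂ) (hb1 : ∀ k, ‖b k‖ ≤ 1)
    (hb2 : ∀ k, 1 ≤ ‖b k - (a : ℂ)‖)
    (s p q : ℝ)
    (hs : s = (1 / ((n : ℝ) - 1)) * (∑ k, b k).re)
    (hp : p = (a / 2 - s) / (1 - a / 2))
    (hq : q = (a / 2 - s) / (1 + a / 2))
    (b' : ℝ) (hb' : 1 < b')
    (B₁ B₂ : ℝ)
    (hB₁ : B₁ = (1 + b' - a) ^ p * (1 + b' ^ 2 - b' * a) ^ ((1 - p) / 2))
    (hB₂ : B₂ = (1 + b') ^ q * (1 + b' ^ 2 - b' * a) ^ ((1 - q) / 2)) :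
    (min B₁ B₂) ^ (n - 1) ≤ ∏ k, ‖(b' : ℂ) - b k‖ := by
  -- basic positivity
  have h1 : (0:ℝ) < 1 + b' := by linarith
  have h2 : (0:ℝ) < 1 + b' - a := by linarith
  have h3 : (0:ℝ) < 1 + b' ^ 2 - b' * a := by nlinarith
  have hu : (0:ℝ) < 1 - a / 2 := by linarith
  have hv : (0:ℝ) < 1 + a / 2 := by linarith
  set c1 : ℝ := Real.log (1 + b') with hc1
  set c2 : ℝ := Real.log (1 + b' - a) with hc2
  set c3 : ℝ := Real.log (1 + b' ^ 2 - b' * a) / 2 with hc3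
  -- cardinality
  have hN : ((n - 1 : ℕ) : ℝ) = (n : ℝ) - 1 := by
    have := Nat.cast_sub (by omega : 1 ≤ n) (R := ℝ); simpa using this
  have hNpos : (0:ℝ) < (n : ℝ) - 1 := by
    have : (2:ℝ) ≤ (n:ℝ) := by exact_mod_cast hn
    linarith
  -- per-point facts
  have hre1 : ∀ k, -1 ≤ (b k).re := fun k => by
    have := Complex.abs_re_le_norm (b k)
    have := hb1 k
    have := abs_le.mp (le_trans (Complex.abs_re_le_norm (b k)) (hb1 k))
    linarith [this.1]
  have hns1 : ∀ k, Complex.normSq (b k) ≤ 1 := fun k => by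
    have h := hb1 k
    have : ‖b k‖ ^ 2 ≤ 1 := by nlinarith [norm_nonneg (b k)]
    rwa [Complex.sq_norm] at this
  have hns2 : ∀ k, 1 ≤ Complex.normSq (b k - (a:ℂ)) := fun k => by
    have h := hb2 k
    have : 1 ≤ ‖b k - (a:ℂ)‖ ^ 2 := by nlinarith [norm_nonneg (b k - (a:ℂ))]
    rwa [Complex.sq_norm] at this
  have hre2 : ∀ k, (b k).re ≤ a / 2 := fun k => by
    have h1' := hns1 k
    have h2' := hns2 k
    simp [Complex.normSq_apply, Complex.sub_re, Complex.sub_im] at h1' h2'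
    nlinarith
  have hkey1 : ∀ k, b' - (b k).re ≤ ‖(b':ℂ) - b k‖ := fun k => by
    have := Complex.re_le_norm ((b':ℂ) - b k)
    simpa [Complex.sub_re] using this
  have hkey2 : ∀ k, 1 + b' ^ 2 - a ^ 2 - 2 * (b' - a) * (b k).re
      ≤ ‖(b':ℂ) - b k‖ ^ 2 := by
    intro k
    rw [Complex.sq_norm]
    have h2' := hns2 k
    simp [Complex.normSq_apply, Complex.sub_re, Complex.sub_im] at h2' ⊢
    nlinarith
  have habspos : ∀ k, 0 < ‖(b':ℂ) - b k‖ := fun k =>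
    lt_of_lt_of_le (by linarith [hre2 k, ha1] : (0:ℝ) < b' - (b k).re) (hkey1 k)
  -- key pointwise lemma
  have key : ∀ α β : ℝ, α - β ≤ c1 → α + β * (a - 1) ≤ c2 → α + β * (a / 2) ≤ c3 →
      ∀ k, α + β * (b k).re ≤ Real.log (‖(b':ℂ) - b k‖) := by
    intro α β hm1 hm2 hm3 k
    set x : ℝ := (b k).re with hx
    have hx1 : -1 ≤ x := hre1 k
    have hx2 : x ≤ a / 2 := hre2 k
    rcases le_or_gt x (a - 1) with hcase | hcase
    · -- left piece: use b' - x ≤ abs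
      obtain ⟨μ, hμ0, hμ1, hμa⟩ : ∃ μ : ℝ, 0 ≤ μ ∧ μ ≤ 1 ∧ μ * a = a - 1 - x :=
        ⟨(a - 1 - x) / a, div_nonneg (by linarith) (le_of_lt ha0),
          by rw [div_le_one ha0]; linarith, div_mul_cancel₀ _ (ne_of_gt ha0)⟩
      have hconc : μ * c1 + (1 - μ) * c2 ≤ Real.log (μ * (1 + b') + (1 - μ) * (1 + b' - a)) :=
        log_interp h1 h2 hμ0 (by linarith) (by ring)
      have heq : μ * (1 + b') + (1 - μ) * (1 + b' - a) = b' - x := by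
        linear_combination hμa
      rw [heq] at hconc
      have hlog : Real.log (b' - x) ≤ Real.log (‖(b':ℂ) - b k‖) :=
        Real.log_le_log (by linarith) (hkey1 k)
      have hlin : α + β * x = μ * (α - β) + (1 - μ) * (α + β * (a - 1)) := by
        linear_combination β * hμa
      have : μ * (α - β) + (1 - μ) * (α + β * (a - 1)) ≤ μ * c1 + (1 - μ) * c2 := by
        have := mul_le_mul_of_nonneg_left hm1 hμ0
        have := mul_le_mul_of_nonneg_left hm2 (by linarith : (0:ℝ) ≤ 1 - μ)
        linarith
      linarith
    · -- right piece: use L x ≤ abs ^ 2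
      obtain ⟨t, ht0, ht1, htu⟩ : ∃ t : ℝ, 0 ≤ t ∧ t ≤ 1 ∧ t * (1 - a / 2) = x - (a - 1) :=
        ⟨(x - (a - 1)) / (1 - a / 2), div_nonneg (by linarith) (le_of_lt hu),
          by rw [div_le_one hu]; linarith, div_mul_cancel₀ _ (ne_of_gt hu)⟩
      have hL : (1 - t) * (1 + b' - a) ^ 2 + t * (1 + b' ^ 2 - b' * a)
          = 1 + b' ^ 2 - a ^ 2 - 2 * (b' - a) * x := by
        linear_combination (-2 * (b' - a)) * htu
      have hp2 : (0:ℝ) < (1 + b' - a) ^ 2 := by positivity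
      have hconc : (1 - t) * Real.log ((1 + b' - a) ^ 2) + t * Real.log (1 + b' ^ 2 - b' * a)
          ≤ Real.log ((1 - t) * (1 + b' - a) ^ 2 + t * (1 + b' ^ 2 - b' * a)) :=
        log_interp hp2 h3 (by linarith) ht0 (by ring)
      rw [hL] at hconc
      have hLpos : 0 < 1 + b' ^ 2 - a ^ 2 - 2 * (b' - a) * x := by nlinarith
      have hlog2 : Real.log (1 + b' ^ 2 - a ^ 2 - 2 * (b' - a) * x)
          ≤ Real.log (‖(b':ℂ) - b k‖ ^ 2) :=
        Real.log_le_log hLpos (hkey2 k)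
      have hsq : Real.log (‖(b':ℂ) - b k‖ ^ 2)
          = 2 * Real.log (‖(b':ℂ) - b k‖) := by
        rw [Real.log_pow]; push_cast; ring
      have hsq2 : Real.log ((1 + b' - a) ^ 2) = 2 * c2 := by
        rw [hc2, Real.log_pow]; push_cast; ring
      have hlin : α + β * x = (1 - t) * (α + β * (a - 1)) + t * (α + β * (a / 2)) := by
        linear_combination (-β) * htu
      have hineq : (1 - t) * (α + β * (a - 1)) + t * (α + β * (a / 2))
          ≤ (1 - t) * c2 + t * c3 := by
        have := mul_le_mul_of_nonneg_left hm2 (by linarith : (0:ℝ) ≤ 1 - t)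
        have := mul_le_mul_of_nonneg_left hm3 ht0
        linarith
      rw [hsq2] at hconc
      rw [hsq] at hlog2
      rw [hc3] at hineq
      linarith
  -- sum of real parts
  have hsum : ∑ k, (b k).re = ((n:ℝ) - 1) * s := by
    rw [hs, ← Complex.re_sum]
    field_simp
  -- positivity of min
  have hB1pos : 0 < B₁ := by
    rw [hB₁]; positivity
  have hB2pos : 0 < B₂ := by
    rw [hB₂]; positivity
  have hMpos : 0 < min B₁ B₂ := lt_min hB1pos hB2pos
  have logB₁ : Real.log B₁ = p * c2 + (1 - p) * c3 := by
    rw [hB₁, Real.log_mul (ne_of_gt (Real.rpow_pos_of_pos h2 p))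
      (ne_of_gt (Real.rpow_pos_of_pos h3 _)), Real.log_rpow h2, Real.log_rpow h3, hc2, hc3]
    ring
  have logB₂ : Real.log B₂ = q * c1 + (1 - q) * c3 := by
    rw [hB₂, Real.log_mul (ne_of_gt (Real.rpow_pos_of_pos h1 q))
      (ne_of_gt (Real.rpow_pos_of_pos h3 _)), Real.log_rpow h1, Real.log_rpow h3, hc1, hc3]
    ring
  have hps : p * (1 - a / 2) = a / 2 - s := by
    rw [hp, div_mul_cancel₀ _ (ne_of_gt hu)]
  have hqs : q * (1 + a / 2) = a / 2 - s := by
    rw [hq, div_mul_cancel₀ _ (ne_of_gt hv)]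
  -- choose the line
  have hfin : ∃ α β : ℝ, (α - β ≤ c1) ∧ (α + β * (a - 1) ≤ c2) ∧ (α + β * (a / 2) ≤ c3) ∧
      Real.log (min B₁ B₂) ≤ α + β * s := by
    rcases le_or_gt ((1 + a / 2) * c2) ((1 - a / 2) * c1 + a * c3) with hAB | hAB
    · -- use line through (a-1, c2), (a/2, c3)
      obtain ⟨β, hβ⟩ : ∃ β : ℝ, β * (1 - a / 2) = c3 - c2 :=
        ⟨(c3 - c2) / (1 - a / 2), div_mul_cancel₀ _ (ne_of_gt hu)⟩
      refine ⟨c2 - β * (a - 1), β, ?_, le_of_eq (by ring), le_of_eq (by linear_combination hβ), ?_⟩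
      · have hβa : a * (β * (1 - a / 2)) = a * (c3 - c2) := by rw [hβ]
        have h5 : (c2 - c1 - a * β) * (1 - a / 2) ≤ 0 := by nlinarith [hAB, hβa]
        nlinarith [h5, hu]
      · have hmin : Real.log (min B₁ B₂) ≤ Real.log B₁ :=
          Real.log_le_log hMpos (min_le_left _ _)
        have heq : Real.log B₁ = c2 - β * (a - 1) + β * s := by
          rw [logB₁]; linear_combination (p - 1) * hβ - β * hps
        linarith
    · -- use line through (-1, c1), (a/2, c3)
      obtain ⟨β, hβ⟩ : ∃ β : ℝ, β * (1 + a / 2) = c3 - c1 :=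
        ⟨(c3 - c1) / (1 + a / 2), div_mul_cancel₀ _ (ne_of_gt hv)⟩
      refine ⟨c1 + β, β, le_of_eq (by ring), ?_, le_of_eq (by linear_combination hβ), ?_⟩
      · have hβa : a * (β * (1 + a / 2)) = a * (c3 - c1) := by rw [hβ]
        have h5 : (c1 + a * β - c2) * (1 + a / 2) ≤ 0 := by nlinarith [hAB, hβa]
        nlinarith [h5, hv]
      · have hmin : Real.log (min B₁ B₂) ≤ Real.log B₂ :=
          Real.log_le_log hMpos (min_le_right _ _)
        have heq : Real.log B₂ = c1 + β + β * s := by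
          rw [logB₂]; linear_combination (q - 1) * hβ - β * hqs
        linarith
  obtain ⟨α, β, hm1, hm2, hm3, hMs⟩ := hfin
  have hk := key α β hm1 hm2 hm3
  have hsum2 : ∑ k, (α + β * (b k).re) = ((n:ℝ) - 1) * (α + β * s) := by
    rw [Finset.sum_add_distrib, Finset.sum_const, ← Finset.mul_sum, hsum,
      Finset.card_univ, Fintype.card_fin, nsmul_eq_mul, hN]
    ring
  have hlogmain : ((n:ℝ) - 1) * Real.log (min B₁ B₂)
      ≤ ∑ k, Real.log (‖(b':ℂ) - b k‖) := by
    calc ((n:ℝ) - 1) * Real.log (min B₁ B₂) ≤ ((n:ℝ) - 1) * (α + β * s) :=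
          mul_le_mul_of_nonneg_left hMs (le_of_lt hNpos)
      _ = ∑ k, (α + β * (b k).re) := hsum2.symm
      _ ≤ ∑ k, Real.log (‖(b':ℂ) - b k‖) :=
          Finset.sum_le_sum fun k _ => hk k
  calc (min B₁ B₂) ^ (n - 1)
      = Real.exp (((n:ℝ) - 1) * Real.log (min B₁ B₂)) := by
        rw [← hN, Real.exp_nat_mul, Real.exp_log hMpos]
    _ ≤ Real.exp (∑ k, Real.log (‖(b':ℂ) - b k‖)) := Real.exp_le_exp.mpr hlogmain
    _ = ∏ k, Real.exp (Real.log (‖(b':ℂ) - b k‖)) := Real.exp_sum _ _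
    _ = ∏ k, ‖(b':ℂ) - b k‖ :=
          Finset.prod_congr rfl fun k _ => Real.exp_log (habspos k)
end

section
/- Let c and r be real numbers with 0 < c < 1 and 0 < r < 1 − c. Let a_1, ..., a_n be complex numbers with 0 < |a_k| ≤ 1 and |(c − a_k)/(1 − c·a_k)| ≥ r for all k. Then ∏_{k=1}^n |(c − a_k)/(1 − c·a_k)| ≥ r^β, where β = log(∏_{k=1}^n |a_k|) / log((c + r)/(1 + cr)). -/
open Finset

-- concavity lemma: phi(u) = log((e^u - c)/(1 - c e^u)) is concave on [log s, 0]
theorem key_concave (c r : ℝ) (hc0 : 0 < c) (hc1 : c < 1)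
    (hr0 : 0 < r) (hr1 : r < 1 - c) (x : ℝ)
    (hsx : (c + r) / (1 + c * r) ≤ x) (hx1 : x ≤ 1) :
    r ^ (Real.log x / Real.log ((c + r) / (1 + c * r))) ≤ (x - c) / (1 - c * x) := by
  set s := (c + r) / (1 + c * r) with hs
  have hden : (0:ℝ) < 1 + c * r := by nlinarith
  have hs0 : 0 < s := div_pos (by linarith) hden
  have hs1 : s < 1 := by
    rw [div_lt_one hden]; nlinarith
  have hcs : c < s := by
    rw [lt_div_iff₀ hden]; nlinarith [mul_pos hr0 (show (0:ℝ) < 1 - c^2 by nlinarith)]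
  have hrs : r ≤ s := by
    rw [le_div_iff₀ hden]; nlinarith [mul_pos hc0 (show (0:ℝ) < 1 - r^2 by nlinarith)]
  have hlogs : Real.log s < 0 := Real.log_neg hs0 hs1
  -- the function and its derivatives
  set f : ℝ → ℝ := fun u => Real.log (Real.exp u - c) - Real.log (1 - c * Real.exp u) with hf
  set f' : ℝ → ℝ := fun u =>
      Real.exp u / (Real.exp u - c) + c * Real.exp u / (1 - c * Real.exp u) with hf'
  set f'' : ℝ → ℝ := fun u =>
      c * Real.exp u * (1 / (1 - c * Real.exp u) ^ 2 - 1 / (Real.exp u - c) ^ 2) with hf''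
  have hmem : ∀ u ∈ Set.Icc (Real.log s) 0, s ≤ Real.exp u ∧ Real.exp u ≤ 1 := by
    intro u hu
    constructor
    · calc s = Real.exp (Real.log s) := (Real.exp_log hs0).symm
        _ ≤ Real.exp u := Real.exp_le_exp.2 hu.1
    · calc Real.exp u ≤ Real.exp 0 := Real.exp_le_exp.2 hu.2
        _ = 1 := Real.exp_zero
  have hD : interior (Set.Icc (Real.log s) 0) = Set.Ioo (Real.log s) 0 := interior_Icc
  have hmem' : ∀ u ∈ Set.Ioo (Real.log s) 0, s ≤ Real.exp u ∧ Real.exp u ≤ 1 := fun u hu =>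
    hmem u (Set.Ioo_subset_Icc_self hu)
  have hder1 : ∀ u ∈ interior (Set.Icc (Real.log s) 0), HasDerivAt f (f' u) u := by
    rw [hD]
    intro u hu
    obtain ⟨h1, h2⟩ := hmem' u hu
    have hec : 0 < Real.exp u - c := by linarith
    have hce : 0 < 1 - c * Real.exp u := by nlinarith
    have d1 : HasDerivAt (fun u => Real.exp u - c) (Real.exp u) u :=
      (Real.hasDerivAt_exp u).sub_const c
    have d2 : HasDerivAt (fun u => 1 - c * Real.exp u) (-(c * Real.exp u)) u :=
      ((Real.hasDerivAt_exp u).const_mul c).const_sub 1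
    have := (d1.log (ne_of_gt hec)).sub (d2.log (ne_of_gt hce))
    exact this.congr_deriv (by simp only [hf']; rw [neg_div, sub_neg_eq_add])
  have hder2 : ∀ u ∈ interior (Set.Icc (Real.log s) 0), HasDerivAt f' (f'' u) u := by
    rw [hD]
    intro u hu
    obtain ⟨h1, h2⟩ := hmem' u hu
    have hec : 0 < Real.exp u - c := by linarith
    have hce : 0 < 1 - c * Real.exp u := by nlinarith
    have d1 : HasDerivAt (fun u => Real.exp u - c) (Real.exp u) u :=
      (Real.hasDerivAt_exp u).sub_const c
    have d2 : HasDerivAt (fun u => 1 - c * Real.exp u) (-(c * Real.exp u)) u :=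
      ((Real.hasDerivAt_exp u).const_mul c).const_sub 1
    have e1 := (Real.hasDerivAt_exp u).div d1 (ne_of_gt hec)
    have e2 := ((Real.hasDerivAt_exp u).const_mul c).div d2 (ne_of_gt hce)
    have := e1.add e2
    exact this.congr_deriv (by simp only [hf'']; ring)
  have hconc : ConcaveOn ℝ (Set.Icc (Real.log s) 0) f := by
    apply concaveOn_of_hasDerivWithinAt2_nonpos (convex_Icc _ _)
      (f' := f') (f'' := f'')
    · -- continuity
      apply ContinuousOn.sub
      · apply ContinuousOn.log (Real.continuous_exp.continuousOn.sub continuousOn_const)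
        intro u hu
        have := (hmem u hu).1
        have : 0 < Real.exp u - c := by linarith
        exact ne_of_gt this
      · apply ContinuousOn.log (continuousOn_const.sub
          (Real.continuous_exp.continuousOn.const_smul c))
        intro u hu
        obtain ⟨h1, h2⟩ := hmem u hu
        have : 0 < 1 - c * Real.exp u := by nlinarith
        simpa using ne_of_gt this
    · intro u hu; exact (hder1 u hu).hasDerivWithinAt
    · intro u hu; exact (hder2 u hu).hasDerivWithinAt
    · intro u hu
      rw [hD] at hu
      obtain ⟨h1, h2⟩ := hmem' u hu
      have hu2 : Real.exp u < 1 := by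
        calc Real.exp u < Real.exp 0 := Real.exp_lt_exp.2 hu.2
          _ = 1 := Real.exp_zero
      have hec : 0 < Real.exp u - c := by linarith
      have hce : 0 < 1 - c * Real.exp u := by nlinarith
      have hle : Real.exp u - c ≤ 1 - c * Real.exp u := by nlinarith
      have hsq : (Real.exp u - c) ^ 2 ≤ (1 - c * Real.exp u) ^ 2 := by nlinarith
      have : 1 / (1 - c * Real.exp u) ^ 2 - 1 / (Real.exp u - c) ^ 2 ≤ 0 := by
        have h1 : 1 / (1 - c * Real.exp u) ^ 2 ≤ 1 / (Real.exp u - c) ^ 2 :=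
          one_div_le_one_div_of_le (by positivity) hsq
        linarith
      have hpos : 0 ≤ c * Real.exp u := by positivity
      exact mul_nonpos_of_nonneg_of_nonpos hpos this
  -- apply concavity
  have hx0 : 0 < x := lt_of_lt_of_le hs0 hsx
  have hlogx1 : Real.log x ≤ 0 := Real.log_nonpos (le_of_lt hx0) hx1
  have hlogx2 : Real.log s ≤ Real.log x := Real.log_le_log hs0 hsx
  set lam := Real.log x / Real.log s with hlam
  have hlam0 : 0 ≤ lam := by
    rw [hlam, div_nonneg_iff]
    exact Or.inr ⟨hlogx1, le_of_lt hlogs⟩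
  have hlam1 : lam ≤ 1 := by
    rw [hlam, div_le_one_of_neg hlogs]
    exact hlogx2
  have happ := hconc.2 (Set.left_mem_Icc.2 (le_of_lt hlogs)) (Set.right_mem_Icc.2 (le_of_lt hlogs))
      hlam0 (by linarith : (0:ℝ) ≤ 1 - lam) (by ring)
  have hcomb : lam • Real.log s + (1 - lam) • (0:ℝ) = Real.log x := by
    rw [smul_eq_mul, smul_eq_mul, mul_zero, add_zero, hlam,
      div_mul_cancel₀ _ (ne_of_lt hlogs)]
  rw [hcomb] at happ
  -- compute f at the three points
  have hxc : 0 < x - c := by linarith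
  have hcx : 0 < 1 - c * x := by nlinarith
  have hfx : f (Real.log x) = Real.log ((x - c) / (1 - c * x)) := by
    simp only [hf]
    rw [Real.exp_log hx0, Real.log_div (ne_of_gt hxc) (ne_of_gt hcx)]
  have hfs : f (Real.log s) = Real.log r := by
    simp only [hf]
    rw [Real.exp_log hs0]
    have hsc : 0 < s - c := by linarith
    have hcs' : 0 < 1 - c * s := by nlinarith
    rw [← Real.log_div (ne_of_gt hsc) (ne_of_gt hcs')]
    congr 1
    have hs' : s * (1 + c * r) = c + r := by
      rw [hs]; field_simp
    rw [div_eq_iff (ne_of_gt hcs')]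
    linear_combination hs'
  have hf0 : f 0 = 0 := by
    simp [hf]
  rw [hfx, hfs, hf0] at happ
  simp only [smul_eq_mul, mul_zero, add_zero] at happ
  -- conclude
  have : r ^ lam = Real.exp (lam * Real.log r) := by
    rw [Real.rpow_def_of_pos hr0]; ring_nf
  rw [this]
  calc Real.exp (lam * Real.log r) ≤ Real.exp (Real.log ((x - c) / (1 - c * x))) :=
        Real.exp_le_exp.2 happ
    _ = (x - c) / (1 - c * x) := Real.exp_log (div_pos hxc hcx)

theorem key_factor (c r : ℝ) (hc0 : 0 < c) (hc1 : c < 1)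
    (hr0 : 0 < r) (hr1 : r < 1 - c) (z : ℂ)
    (hz0 : 0 < ‖z‖) (hz1 : ‖z‖ ≤ 1)
    (hzr : r ≤ ‖((c : ℂ) - z) / (1 - (c : ℂ) * z)‖) :
    r ^ (Real.log ‖z‖ / Real.log ((c + r) / (1 + c * r)))
      ≤ ‖((c : ℂ) - z) / (1 - (c : ℂ) * z)‖ := by
  set s := (c + r) / (1 + c * r) with hs
  have hden : (0:ℝ) < 1 + c * r := by nlinarith
  have hs0 : 0 < s := div_pos (by linarith) hden
  have hs1 : s < 1 := by rw [hs, div_lt_one hden]; nlinarith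
  have hcs : c < s := by
    rw [hs, lt_div_iff₀ hden]; nlinarith [mul_pos hr0 (show (0:ℝ) < 1 - c^2 by nlinarith)]
  have hlogs : Real.log s < 0 := Real.log_neg hs0 hs1
  set x := ‖z‖ with hx
  by_cases hxs : x ≤ s
  · -- small |z|: exponent ≥ 1, so r ^ e ≤ r ≤ |φ|
    have he : 1 ≤ Real.log x / Real.log s := by
      rw [one_le_div_of_neg hlogs]
      exact Real.log_le_log hz0 hxs
    have := Real.rpow_le_rpow_of_exponent_ge hr0 (by linarith : r ≤ 1) he
    rw [Real.rpow_one] at this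
    exact le_trans this hzr
  · push_neg at hxs
    have hsx : s ≤ x := le_of_lt hxs
    have hkey := key_concave c r hc0 hc1 hr0 hr1 x hsx hz1
    refine le_trans hkey ?_
    -- show (x - c)/(1 - c x) ≤ |φ|
    set A := ‖1 - (c : ℂ) * z‖ with hA
    set B := ‖(c : ℂ) - z‖ with hB
    have hcx : 0 < 1 - c * x := by nlinarith
    have hA1 : 1 - c * x ≤ A := by
      have h1 := norm_sub_norm_le (1 : ℂ) ((c : ℂ) * z)
      simpa [norm_mul, Complex.norm_real, Real.norm_eq_abs, abs_of_pos hc0] using h1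
    have hA0 : 0 < A := lt_of_lt_of_le hcx hA1
    have hne : (1 : ℂ) - (c : ℂ) * z ≠ 0 := by
      intro h
      rw [hA, h] at hA0
      simp at hA0
    have hid : Complex.normSq (1 - (c:ℂ) * z) - Complex.normSq ((c:ℂ) - z)
        = (1 - c ^ 2) * (1 - Complex.normSq z) := by
      simp [Complex.normSq_apply, Complex.sub_re, Complex.sub_im, Complex.mul_re,
        Complex.mul_im, Complex.one_re, Complex.one_im, Complex.ofReal_re, Complex.ofReal_im]
      ring
    have hBsq : B ^ 2 = A ^ 2 - (1 - c ^ 2) * (1 - x ^ 2) := by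
      rw [hB, hA, hx, Complex.sq_norm, Complex.sq_norm, Complex.sq_norm]
      linarith [hid]
    have hB0 : 0 ≤ B := norm_nonneg _
    rw [norm_div, ← hA, ← hB, div_le_div_iff₀ hcx hA0]
    have h1 : (0:ℝ) ≤ 1 - c ^ 2 := by nlinarith
    have h2 : (0:ℝ) ≤ 1 - x ^ 2 := by nlinarith
    have h3 : (1 - c * x) ^ 2 ≤ A ^ 2 := by nlinarith
    have hsq : ((x - c) * A) ^ 2 ≤ (B * (1 - c * x)) ^ 2 := by
      have expand : (B * (1 - c * x)) ^ 2 - ((x - c) * A) ^ 2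
          = (1 - c ^ 2) * (1 - x ^ 2) * (A ^ 2 - (1 - c * x) ^ 2) := by
        rw [mul_pow, mul_pow, hBsq]; ring
      have hnn := mul_nonneg (mul_nonneg h1 h2) (sub_nonneg.2 h3)
      linarith [expand, hnn]
    have hxc : 0 < x - c := by linarith
    exact (pow_le_pow_iff_left₀ (mul_pos hxc hA0).le (mul_nonneg hB0 hcx.le)
      two_ne_zero).mp hsq

theorem prod_moebius_abs_ge (n : ℕ) (c r : ℝ) (hc0 : 0 < c) (hc1 : c < 1)
    (hr0 : 0 < r) (hr1 : r < 1 - c)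
    (a : Fin n → ℂ) (ha0 : ∀ k, 0 < ‖a k‖) (ha1 : ∀ k, ‖a k‖ ≤ 1)
    (har : ∀ k, r ≤ ‖((c : ℂ) - a k) / (1 - (c : ℂ) * a k)‖)
    (β : ℝ)
    (hβ : β = Real.log (∏ k, ‖a k‖) / Real.log ((c + r) / (1 + c * r))) :
    r ^ β ≤ ∏ k, ‖((c : ℂ) - a k) / (1 - (c : ℂ) * a k)‖ := by
  have hβ' : β = ∑ k, Real.log (‖a k‖) / Real.log ((c + r) / (1 + c * r)) := by
    rw [hβ, Real.log_prod (fun k _ => (ha0 k).ne'), Finset.sum_div]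
  calc r ^ β = ∏ k, r ^ (Real.log (‖a k‖) / Real.log ((c + r) / (1 + c * r))) := by
        rw [hβ', Real.rpow_sum_of_pos hr0]
    _ ≤ ∏ k, ‖((c : ℂ) - a k) / (1 - (c : ℂ) * a k)‖ := by
        apply Finset.prod_le_prod
        · intro k _
          exact Real.rpow_nonneg hr0.le _
        · intro k _
          exact key_factor c r hc0 hc1 hr0 hr1 (a k) (ha0 k) (ha1 k) (har k)
end

section
/- Let a ∈ (0,1) and let P(z) = (z − a)·∏_{k=1}^{n−1}(z − z_k) be a monic complex polynomial of degree n ≥ 2 with all zeros in the closed unit disk, and write P'(z) = n·∏_{k=1}^{n−1}(z − ζ_k) for its critical points ζ_k. Then for every real b > 1, (b − a)·∏_{k=1}^{n−1} |b − z_k| ≥ (b − 1)·∏_{k=1}^{n−1} |b − ζ_k|. -/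
open Polynomial Finset

theorem prod_zeros_ge_prod_critical (n : ℕ) (hn : 2 ≤ n) (a : ℝ) (ha0 : 0 < a) (ha1 : a < 1)
    (z ζ : Fin (n - 1) → ℂ) (P : Polynomial ℂ)
    (hP : P = (Polynomial.X - Polynomial.C (a : ℂ)) * ∏ k, (Polynomial.X - Polynomial.C (z k)))
    (hz : ∀ k, ‖z k‖ ≤ 1)
    (hP' : Polynomial.derivative P = Polynomial.C (n : ℂ) * ∏ k, (Polynomial.X - Polynomial.C (ζ k)))
    (b : ℝ) (hb : 1 < b) :
    (b - 1) * ∏ k, ‖(b : ℂ) - ζ k‖ ≤ (b - a) * ∏ k, ‖(b : ℂ) - z k‖ := by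
  set r : Option (Fin (n-1)) → ℂ := fun o => o.elim (a:ℂ) z with hr
  have hb0 : (0:ℝ) < b := by linarith
  -- each |b - r i| ≥ b - 1
  have hrle : ∀ i, (b - 1 : ℝ) ≤ ‖(b:ℂ) - r i‖ := by
    intro i
    have h1 : ‖r i‖ ≤ 1 := by
      cases i with
      | none => simp [hr, abs_of_pos ha0]; linarith
      | some k => simpa [hr] using hz k
    have h2 : ‖(b:ℂ)‖ - ‖r i‖ ≤ ‖(b:ℂ) - r i‖ := by
      exact norm_sub_norm_le ((b:ℂ)) (r i)
    have h3 : ‖(b:ℂ)‖ = b := by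
      simp [abs_of_pos hb0]
    linarith
  -- P as a product over Option
  have hPopt : P = ∏ i : Option (Fin (n-1)), (X - C (r i)) := by
    rw [hP, Fintype.prod_option]
    simp [hr]
  -- evaluate derivative
  have key : ∀ (s : Finset (Option (Fin (n-1)))),
      Polynomial.derivative (∏ i ∈ s, (X - C (r i)))
        = ∑ i ∈ s, ∏ j ∈ s.erase i, (X - C (r j)) := by
    intro s
    induction s using Finset.induction_on with
    | empty => simp
    | @insert c s hc ih =>
      rw [Finset.prod_insert hc, Polynomial.derivative_mul, ih, Finset.sum_insert hc,
        Finset.erase_insert hc]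
      simp only [Polynomial.derivative_sub, Polynomial.derivative_X, Polynomial.derivative_C,
        sub_zero, one_mul]
      congr 1
      rw [Finset.mul_sum]
      refine Finset.sum_congr rfl fun i hi => ?_
      rw [Finset.erase_insert_of_ne (by rintro rfl; exact hc hi),
        Finset.prod_insert (fun h => hc (Finset.mem_of_mem_erase h))]
  have hderiv : Polynomial.derivative P
      = ∑ i : Option (Fin (n-1)), ∏ j ∈ univ.erase i, (X - C (r j)) := by
    rw [hPopt]; exact key univ
  have heval : ((n:ℂ)) * ∏ k, ((b:ℂ) - ζ k)
      = ∑ i : Option (Fin (n-1)), ∏ j ∈ univ.erase i, ((b:ℂ) - r j) := by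
    have h1 := congrArg (Polynomial.eval (b:ℂ)) hP'
    rw [hderiv] at h1
    simpa [Polynomial.eval_prod, Polynomial.eval_finset_sum] using h1.symm
  -- the full product of |b - r j|
  have hprod : ∏ i : Option (Fin (n-1)), ‖(b:ℂ) - r i‖
      = (b - a) * ∏ k, ‖(b:ℂ) - z k‖ := by
    rw [Fintype.prod_option]
    congr 1
    simp [hr, ← Complex.ofReal_sub, abs_of_pos (by linarith : (0:ℝ) < b - a)]
  -- per-term bound
  have hterm : ∀ i : Option (Fin (n-1)),
      (b - 1) * ‖∏ j ∈ univ.erase i, ((b:ℂ) - r j)‖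
        ≤ (b - a) * ∏ k, ‖(b:ℂ) - z k‖ := by
    intro i
    rw [← hprod, ← Finset.mul_prod_erase univ _ (Finset.mem_univ i)]
    rw [norm_prod]
    exact mul_le_mul_of_nonneg_right (hrle i)
      (Finset.prod_nonneg fun j _ => norm_nonneg _)
  -- card
  have hcard : (Fintype.card (Option (Fin (n-1))) : ℝ) = n := by
    have h1 : Fintype.card (Option (Fin (n-1))) = n := by simp; omega
    rw [h1]
  -- main estimate
  have habs : ‖(n:ℂ) * ∏ k, ((b:ℂ) - ζ k)‖
      = n * ∏ k, ‖(b:ℂ) - ζ k‖ := by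
    rw [norm_mul, norm_prod]
    simp
  have hmain : (b - 1) * (n * ∏ k, ‖(b:ℂ) - ζ k‖)
      ≤ n * ((b - a) * ∏ k, ‖(b:ℂ) - z k‖) := by
    rw [← habs, heval]
    calc (b - 1) * ‖∑ i : Option (Fin (n-1)), ∏ j ∈ univ.erase i, ((b:ℂ) - r j)‖
        ≤ (b - 1) * ∑ i : Option (Fin (n-1)),
            ‖∏ j ∈ univ.erase i, ((b:ℂ) - r j)‖ := by
          apply mul_le_mul_of_nonneg_left _ (by linarith : (0:ℝ) ≤ b - 1)
          exact norm_sum_le _ _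
      _ = ∑ i : Option (Fin (n-1)),
            (b - 1) * ‖∏ j ∈ univ.erase i, ((b:ℂ) - r j)‖ := by
          rw [Finset.mul_sum]
      _ ≤ ∑ _i : Option (Fin (n-1)), (b - a) * ∏ k, ‖(b:ℂ) - z k‖ := by
          exact Finset.sum_le_sum fun i _ => hterm i
      _ = n * ((b - a) * ∏ k, ‖(b:ℂ) - z k‖) := by
          rw [Finset.sum_const, Finset.card_univ, nsmul_eq_mul, hcard]
  have hnpos : (0:ℝ) < n := by positivity
  nlinarith [hmain, Finset.prod_nonneg (fun k (_ : k ∈ (univ : Finset (Fin (n-1)))) =>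
    norm_nonneg ((b:ℂ) - ζ k))]
end
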